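/- Let α ∈ ℂ, 0 < ρ < r be real numbers, let Ψ : ℂ → ℂ be holomorphic on the exterior region E = {z ∈ ℂ : |z − α| > ρ}, and suppose Ψ(z)/(z − α) tends to a limit c ∈ ℂ as z → ∞ (along the cobounded filter on ℂ). Then for every z with |z − α| > r, Ψ(z) = c·(z − α) − ((z − α)/(2πi))·∮_{|ζ−α|=r} Ψ(ζ)/((ζ − α)(ζ − z)) dζ, where the circle |ζ − α| = r is traversed counterclockwise. -/

import Mathlib

open Complex Filter Bornology Metric Set

private lemma circle_int_inv_zero {α z : ℂ} {r : ℝ} (hr : 0 ≤ r)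
    (hz : r < ‖z - α‖) :
    (∮ ζ in C(α, r), (ζ - z)⁻¹) = 0 := by
  have hne : ∀ ζ ∈ closedBall α r, ζ - z ≠ 0 := by
    intro ζ hζ
    rw [mem_closedBall, Complex.dist_eq] at hζ
    refine sub_ne_zero.2 fun h => ?_
    subst h; exact absurd hz (not_lt.2 hζ)
  exact Complex.circleIntegral_eq_zero_of_differentiable_on_off_countable hr
    Set.countable_empty ((continuousOn_id.sub continuousOn_const).inv₀ hne)
    (fun w hw => (differentiableAt_id.sub_const z).inv (hne w (ball_subset_closedBall hw.1)))

set_option maxHeartbeats 1000000 in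
private lemma key_exterior (α : ℂ) (ρ r : ℝ) (hρ : 0 < ρ) (hr : ρ < r)
    (g : ℂ → ℂ) (c : ℂ)
    (hg : DifferentiableOn ℂ g {w : ℂ | ρ < ‖w - α‖})
    (hlim : Tendsto g (cobounded ℂ) (nhds c))
    (z : ℂ) (hz : r < ‖z - α‖) :
    (∮ ζ in C(α, r), g ζ / (ζ - z)) = 2 * Real.pi * Complex.I * (c - g z) := by
  have hr0 : 0 < r := hρ.trans hr
  set U : Set ℂ := {w : ℂ | ρ < ‖w - α‖} with hUdef
  have hUopen : IsOpen U := by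
    have : U = (fun w => ‖w - α‖) ⁻¹' Set.Ioi ρ := rfl
    rw [this]
    exact isOpen_Ioi.preimage (continuous_norm.comp (continuous_id.sub continuous_const))
  have hzU : z ∈ U := hr.trans hz
  have hdsl : DifferentiableOn ℂ (dslope g z) U :=
    (Complex.differentiableOn_dslope (hUopen.mem_nhds hzU)).2 hg
  have hsphU : ∀ {s : ℝ}, r ≤ s → sphere α s ⊆ U := by
    intro s hs ζ hζ
    rw [mem_sphere, Complex.dist_eq] at hζ
    exact (hr.trans_le hs).trans_eq hζ.symm
  have hsphne : ∀ {s : ℝ}, ‖z - α‖ ≠ s → ∀ ζ ∈ sphere α s, ζ - z ≠ 0 := by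
    intro s hzs ζ hζ
    rw [mem_sphere, Complex.dist_eq] at hζ
    refine sub_ne_zero.2 fun h => hzs ?_
    rw [← h]; exact hζ
  have hci : ∀ {s : ℝ}, r ≤ s → ‖z - α‖ ≠ s →
      CircleIntegrable (fun ζ => g ζ / (ζ - z)) α s := by
    intro s hs hzs
    exact ContinuousOn.circleIntegrable (hr0.le.trans hs)
      ((hg.continuousOn.mono (hsphU hs)).div
        (continuousOn_id.sub continuousOn_const) (hsphne hzs))
  have hciinv : ∀ {s : ℝ}, 0 ≤ s → ‖z - α‖ ≠ s →
      CircleIntegrable (fun ζ => (ζ - z)⁻¹) α s := by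
    intro s hs hzs
    exact ContinuousOn.circleIntegrable hs
      ((continuousOn_id.sub continuousOn_const).inv₀ (hsphne hzs))
  have hcic : ∀ (a : ℂ) {s : ℝ}, 0 ≤ s → ‖z - α‖ ≠ s →
      CircleIntegrable (fun ζ => a * (ζ - z)⁻¹) α s := by
    intro a s hs hzs
    exact ContinuousOn.circleIntegrable hs
      (continuousOn_const.mul ((continuousOn_id.sub continuousOn_const).inv₀ (hsphne hzs)))
  -- splitting the dslope integral
  have split : ∀ s : ℝ, r ≤ s → ‖z - α‖ ≠ s →
      (∮ ζ in C(α, s), dslope g z ζ)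
        = (∮ ζ in C(α, s), g ζ / (ζ - z)) - g z * ∮ ζ in C(α, s), (ζ - z)⁻¹ := by
    intro s hs hzs
    have hs0 : 0 ≤ s := hr0.le.trans hs
    have hEq : Set.EqOn (dslope g z)
        (fun ζ => g ζ / (ζ - z) - g z * (ζ - z)⁻¹) (sphere α s) := by
      intro ζ hζ
      have hζz : ζ ≠ z := sub_ne_zero.1 (hsphne hzs ζ hζ)
      rw [dslope_of_ne _ hζz, slope_def_field, sub_div, div_eq_mul_inv (g z)]
    rw [circleIntegral.integral_congr hs0 hEq,
      circleIntegral.integral_sub (hci hs hzs) (hcic (g z) hs0 hzs),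
      circleIntegral.integral_const_mul]
  -- the integral over big circles is constant in R
  have main : ∀ R : ℝ, ‖z - α‖ < R →
      (∮ ζ in C(α, R), g ζ / (ζ - z))
        = (∮ ζ in C(α, r), g ζ / (ζ - z)) + 2 * Real.pi * Complex.I * g z := by
    intro R hR
    have hrR : r ≤ R := (hz.trans hR).le
    have hann : (∮ ζ in C(α, R), dslope g z ζ) = ∮ ζ in C(α, r), dslope g z ζ := by
      refine Complex.circleIntegral_eq_of_differentiable_on_annulus_off_countable hr0 hrR
        Set.countable_empty (hdsl.continuousOn.mono ?_) ?_
      · rintro w ⟨-, hw2⟩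
        rw [mem_ball, Complex.dist_eq, not_lt] at hw2
        exact hr.trans_le hw2
      · rintro w ⟨⟨-, hw2⟩, -⟩
        rw [mem_closedBall, Complex.dist_eq, not_le] at hw2
        exact hdsl.differentiableAt (hUopen.mem_nhds (hr.trans hw2))
    rw [split R hrR hR.ne, split r (le_refl r) hz.ne',
      circleIntegral.integral_sub_inv_of_mem_ball (by
        rw [mem_ball, Complex.dist_eq]; exact hR),
      circle_int_inv_zero hr0.le hz] at hann
    linear_combination hann
  -- limit as R → ∞ identifies the constant
  have hT : (∮ ζ in C(α, r), g ζ / (ζ - z)) + 2 * Real.pi * Complex.I * g z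
      = 2 * Real.pi * Complex.I * c := by
    rw [← sub_eq_zero, ← norm_le_zero_iff]
    refine le_of_forall_gt_imp_ge_of_dense fun ε ε0 => ?_
    set d : ℝ := ‖z - α‖ with hd
    have hd0 : 0 < d := hr0.trans hz
    have hπ : (0:ℝ) < Real.pi := Real.pi_pos
    set ε' : ℝ := ε / (4 * Real.pi + 1) with hε'def
    have hε' : 0 < ε' := div_pos ε0 (by linarith)
    have hev : ∀ᶠ w in cobounded ℂ, dist (g w) c < ε' := Metric.tendsto_nhds.1 hlim _ hε'
    rw [(Filter.hasBasis_cobounded_norm (E := ℂ)).eventually_iff] at hev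
    obtain ⟨M, -, hM⟩ := hev
    set R : ℝ := max (2 * d + 1) (M + ‖α‖) with hRdef
    have hR2 : 2 * d + 1 ≤ R := le_max_left _ _
    have hRM : M + ‖α‖ ≤ R := le_max_right _ _
    have hdR : d < R := by linarith
    have hR0 : 0 < R := hd0.trans hdR
    have hRd : 0 < R - d := by linarith
    have hrR : r ≤ R := (hz.trans hdR).le
    have hneR : ‖z - α‖ ≠ R := hdR.ne
    have hbound : ∀ ζ ∈ sphere α R, ‖g ζ / (ζ - z) - c * (ζ - z)⁻¹‖ ≤ ε' * (R - d)⁻¹ := by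
      intro ζ hζ
      have hζz0 : ζ - z ≠ 0 := hsphne hneR ζ hζ
      rw [mem_sphere, Complex.dist_eq] at hζ
      have hζz : (R - d : ℝ) ≤ ‖ζ - z‖ := by
        have h1 : ‖ζ - α‖ ≤ ‖ζ - z‖ + ‖z - α‖ := by
          calc ‖ζ - α‖ = ‖(ζ - z) + (z - α)‖ := by
                rw [sub_add_sub_cancel]
            _ ≤ ‖ζ - z‖ + ‖z - α‖ := norm_add_le _ _
        rw [hζ, ← hd] at h1
        linarith
      have hgζ : dist (g ζ) c < ε' := by
        refine hM ?_
        show M ≤ ‖ζ‖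
        have h3 : ‖ζ - α‖ ≤ ‖ζ‖ + ‖α‖ := by
          simpa [sub_eq_add_neg, norm_neg] using norm_add_le ζ (-α)
        rw [hζ] at h3
        linarith
      have heq : g ζ / (ζ - z) - c * (ζ - z)⁻¹ = (g ζ - c) * (ζ - z)⁻¹ := by
        rw [div_eq_mul_inv, sub_mul]
      rw [heq, norm_mul, norm_inv]
      have hn1 : ‖g ζ - c‖ ≤ ε' := by rw [← dist_eq_norm]; exact hgζ.le
      have hn2 : (‖ζ - z‖)⁻¹ ≤ (R - d)⁻¹ := inv_anti₀ hRd hζz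
      exact mul_le_mul hn1 hn2 (by positivity) hε'.le
    have hsplit2 : (∮ ζ in C(α, R), (g ζ / (ζ - z) - c * (ζ - z)⁻¹))
        = (∮ ζ in C(α, R), g ζ / (ζ - z)) - c * (2 * Real.pi * Complex.I) := by
      rw [circleIntegral.integral_sub (hci hrR hneR) (hcic c hR0.le hneR),
        circleIntegral.integral_const_mul,
        circleIntegral.integral_sub_inv_of_mem_ball (by
          rw [mem_ball, Complex.dist_eq]; exact hdR)]
    have hnle : ‖∮ ζ in C(α, R), (g ζ / (ζ - z) - c * (ζ - z)⁻¹)‖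
        ≤ 2 * Real.pi * R * (ε' * (R - d)⁻¹) :=
      circleIntegral.norm_integral_le_of_norm_le_const hR0.le hbound
    have heqT : (∮ ζ in C(α, r), g ζ / (ζ - z)) + 2 * Real.pi * Complex.I * g z
        - 2 * Real.pi * Complex.I * c
        = ∮ ζ in C(α, R), (g ζ / (ζ - z) - c * (ζ - z)⁻¹) := by
      rw [hsplit2, ← main R hdR]; ring
    rw [heqT]
    refine hnle.trans ?_
    have hrw : 2 * Real.pi * R * (ε' * (R - d)⁻¹)
        = (2 * Real.pi * R * ε) / ((4 * Real.pi + 1) * (R - d)) := by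
      rw [hε'def]; field_simp
    rw [hrw, div_le_iff₀ (by positivity)]
    nlinarith [mul_le_mul_of_nonneg_left hR2 (mul_nonneg ε0.le (by positivity : (0:ℝ) ≤ 2 * Real.pi)),
      mul_pos ε0 hπ, mul_pos (mul_pos ε0 hπ) hd0, mul_nonneg ε0.le hRd.le]
  linear_combination hT

theorem cauchy_formula_exterior_map
    (α : ℂ) (ρ r : ℝ) (hρ : 0 < ρ) (hr : ρ < r)
    (Ψ : ℂ → ℂ) (c : ℂ)
    (hΨ : DifferentiableOn ℂ Ψ {z : ℂ | ρ < ‖z - α‖})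
    (hlim : Tendsto (fun z => Ψ z / (z - α)) (cobounded ℂ) (nhds c)) :
    ∀ z : ℂ, r < ‖z - α‖ →
      Ψ z = c * (z - α) -
        ((z - α) / (2 * ↑Real.pi * Complex.I)) *
          ∮ ζ in C(α, r), Ψ ζ / ((ζ - α) * (ζ - z)) := by
  intro z hz
  have hr0 : 0 < r := hρ.trans hr
  have hg : DifferentiableOn ℂ (fun w => Ψ w / (w - α)) {w : ℂ | ρ < ‖w - α‖} := by
    refine hΨ.div (differentiableOn_id.sub (differentiableOn_const α)) ?_
    intro w hw
    refine sub_ne_zero.2 fun h => ?_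
    rw [Set.mem_setOf_eq, h, sub_self, norm_zero] at hw
    exact absurd hw (not_lt.2 hρ.le)
  have hkey := key_exterior α ρ r hρ hr (fun w => Ψ w / (w - α)) c hg hlim z hz
  have hcongr : (∮ ζ in C(α, r), Ψ ζ / ((ζ - α) * (ζ - z)))
      = ∮ ζ in C(α, r), (Ψ ζ / (ζ - α)) / (ζ - z) :=
    circleIntegral.integral_congr hr0.le fun ζ _ => (div_div _ _ _).symm
  rw [hcongr, hkey]
  have hzα : z - α ≠ 0 := by
    refine sub_ne_zero.2 fun h => ?_
    rw [h, sub_self, norm_zero] at hz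
    exact absurd hz (not_lt.2 hr0.le)
  have hπI : (2 * (Real.pi : ℂ) * Complex.I) ≠ 0 := by
    simp [Real.pi_ne_zero, Complex.I_ne_zero]
  field_simp
  ring
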